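/- Let Prim = μ * φ be the Dirichlet convolution of the Möbius function with Euler's totient function. Then Prim(n) ≠ 0 if and only if n is not congruent to 2 modulo 4 (for n ≥ 1). -/

import Mathlib

open ArithmeticFunction

/-- Euler's totient function, as an integer-valued arithmetic function. -/
noncomputable def totientArith : ArithmeticFunction ℤ :=
  ⟨fun n => (Nat.totient n : ℤ), by simp⟩

lemma totientArith_mult : totientArith.IsMultiplicative :=
  ⟨by simp [totientArith], fun {m n} h => by
    simp [totientArith, Nat.totient_mul h]⟩

lemma prim_pp {p a : ℕ} (hp : p.Prime) (ha : 1 ≤ a) :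
    (ArithmeticFunction.moebius * totientArith) (p ^ a)
      = ((p ^ a).totient : ℤ) - ((p ^ (a - 1)).totient : ℤ) := by
  rw [mul_apply, Nat.sum_divisorsAntidiagonal (f := fun x y => (moebius x : ℤ) * totientArith y),
    Nat.sum_divisors_prime_pow hp]
  obtain ⟨b, rfl⟩ : ∃ b, a = b + 1 := ⟨a - 1, by omega⟩
  rw [Finset.sum_range_succ']
  rw [Finset.sum_range_succ']
  have h2 : ∀ i ∈ Finset.range b, (moebius (p ^ (i + 1 + 1)) : ℤ) * totientArith (p ^ (b + 1) / p ^ (i + 1 + 1)) = 0 := by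
    intro i hi
    have : moebius (p ^ (i + 1 + 1)) = 0 := by
      rw [moebius_apply_prime_pow hp (by omega)]
      exact if_neg (by omega)
    rw [this, zero_mul]
  rw [Finset.sum_congr rfl h2]
  simp only [Finset.sum_const_zero, zero_add, pow_zero, pow_one]
  rw [moebius_apply_one, moebius_apply_prime hp]
  have hd : p ^ (b + 1) / p = p ^ b := by
    rw [pow_succ, Nat.mul_div_cancel _ hp.pos]
  rw [Nat.div_one, hd]
  simp [totientArith]
  ring

lemma prim_pp_ne_zero {p a : ℕ} (hp : p.Prime) (ha : 1 ≤ a) :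
    (ArithmeticFunction.moebius * totientArith) (p ^ a) ≠ 0 ↔ ¬(p = 2 ∧ a = 1) := by
  rw [prim_pp hp ha, sub_ne_zero]
  rcases Nat.lt_or_ge a 2 with h | h
  · have h1 : a = 1 := by omega
    subst h1
    simp only [pow_one, Nat.sub_self, pow_zero, Nat.totient_one, Nat.totient_prime hp]
    have h2le := hp.two_le
    constructor
    · rintro hne ⟨rfl, -⟩; simp at hne
    · intro hne hcast
      have : p - 1 = 1 := by exact_mod_cast hcast
      exact hne ⟨by omega, by trivial⟩
  · have hne : (p ^ a).totient ≠ (p ^ (a - 1)).totient := by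
      rw [Nat.totient_prime_pow hp (by omega), Nat.totient_prime_pow hp (by omega)]
      have h2 : p ^ (a - 1 - 1) < p ^ (a - 1) := Nat.pow_lt_pow_right hp.one_lt (by omega)
      have h3 : 1 ≤ p - 1 := by have := hp.two_le; omega
      nlinarith [pow_pos hp.pos (a-1-1)]
    exact ⟨fun _ ⟨_, h1⟩ => by omega, fun _ => by exact_mod_cast hne⟩

/-- Let `Prim = μ * φ` (Dirichlet convolution of the Möbius function with
Euler's totient). Then for `n ≥ 1`, `Prim n ≠ 0` iff `n` is not congruent to `2` mod `4`. -/
theorem prim_ne_zero_iff (n : ℕ) (hn : 1 ≤ n) :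
    (ArithmeticFunction.moebius * totientArith) n ≠ 0 ↔ ¬ n % 4 = 2 := by
  have hmult : (ArithmeticFunction.moebius * totientArith).IsMultiplicative :=
    isMultiplicative_moebius.mul totientArith_mult
  have hn0 : n ≠ 0 := by omega
  rw [hmult.multiplicative_factorization _ hn0]
  rw [Finsupp.prod, Finset.prod_ne_zero_iff]
  have hfact2 : n % 4 = 2 ↔ n.factorization 2 = 1 := by
    have h2 : (2 : ℕ).Prime := Nat.prime_two
    have hd2 : 2 ∣ n ↔ 1 ≤ n.factorization 2 := by
      rw [← h2.pow_dvd_iff_le_factorization hn0, pow_one]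
    have hd4 : 4 ∣ n ↔ 2 ≤ n.factorization 2 := by
      rw [← h2.pow_dvd_iff_le_factorization hn0]; norm_num
    constructor
    · intro h
      have : 2 ∣ n := by omega
      have h4 : ¬ 4 ∣ n := by intro ⟨k, hk⟩; omega
      rw [hd2] at this; rw [hd4] at h4; omega
    · intro h
      have h2d : 2 ∣ n := hd2.mpr (by omega)
      have h4 : ¬ 4 ∣ n := fun hh => by have := hd4.mp hh; omega
      omega
  rw [hfact2]
  constructor
  · intro h hc
    have h2s : 2 ∈ n.factorization.support := by
      rw [Nat.support_factorization, Nat.mem_primeFactors]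
      refine ⟨Nat.prime_two, ?_, hn0⟩
      have := (Nat.Prime.pow_dvd_iff_le_factorization Nat.prime_two hn0).mpr (le_of_eq hc.symm)
      simpa using this
    have := h 2 h2s
    rw [prim_pp_ne_zero Nat.prime_two (by omega)] at this
    exact this ⟨rfl, hc⟩
  · intro h p hp
    have hpp : p.Prime := Nat.prime_of_mem_primeFactors (by rwa [← Nat.support_factorization])
    have hk : 1 ≤ n.factorization p := by
      have := Finsupp.mem_support_iff.mp hp; omega
    rw [prim_pp_ne_zero hpp hk]
    rintro ⟨rfl, h1⟩
    exact h h1
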